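/- q-binomial summation identity: for every integer N ≥ 1, every integer K with 0 ≤ K ≤ N − 1, every integer k with 1 ≤ k ≤ N, and every real q ∈ (0,1), Σ_{p=0}^{K} Σ_{r=1}^{N−K} s_{K,p,r}(k) = (−1)^{N−K} q^{(K²+K)/2} [N−1 choose K]_q, where s_{K,p,r}(k) = (−1)^{N−K+p} q^{p(p+1)/2 + (r−k)p + (K²−K)/2 + r(K+r−k)} [k choose p+r]_q [N−k choose N−K−r]_q whenever p + r ≤ k ≤ K + r, and s_{K,p,r}(k) = 0 otherwise. -/

import Mathlib

open scoped BigOperators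

noncomputable section

/-- The q-deformed factorial `[m]_q!`. -/
def qfact (q : ℝ) (m : ℕ) : ℝ := (∏ j ∈ Finset.Icc 1 m, (1 - q ^ j)) / (1 - q) ^ m

/-- The Gaussian binomial coefficient `[n choose k]_q`. -/
def qbinom (q : ℝ) (n k : ℕ) : ℝ :=
  if k ≤ n then qfact q n / (qfact q k * qfact q (n - k)) else 0

/-- The coefficient `s_{K,p,r}(k)`. -/
def sCoef (q : ℝ) (N K p r k : ℕ) : ℝ :=
  if p + r ≤ k ∧ k ≤ K + r then
    (-1 : ℝ) ^ (N - K + p) *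
      q ^ (((p : ℤ) * (p + 1)) / 2 + ((r : ℤ) - (k : ℤ)) * p +
        ((K : ℤ) * K - K) / 2 + (r : ℤ) * ((K : ℤ) + r - k)) *
      qbinom q k (p + r) * qbinom q (N - k) (N - K - r)
  else 0

section Aux

variable {q : ℝ}

lemma one_sub_q_pow_pos (hq0 : 0 < q) (hq1 : q < 1) (j : ℕ) (hj : j ≠ 0) : 0 < 1 - q ^ j := by
  have : q ^ j < 1 := pow_lt_one₀ hq0.le hq1 hj
  linarith

lemma qfact_pos (hq0 : 0 < q) (hq1 : q < 1) (m : ℕ) : 0 < qfact q m := by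
  unfold qfact
  apply div_pos
  · exact Finset.prod_pos (fun j hj => one_sub_q_pow_pos hq0 hq1 j (by simp at hj; omega))
  · exact pow_pos (by linarith) m

lemma qfact_ne_zero (hq0 : 0 < q) (hq1 : q < 1) (m : ℕ) : qfact q m ≠ 0 :=
  (qfact_pos hq0 hq1 m).ne'

lemma qfact_zero : qfact q 0 = 1 := by simp [qfact]

lemma qfact_succ (m : ℕ) : qfact q (m+1) = qfact q m * ((1 - q ^ (m+1)) / (1 - q)) := by
  unfold qfact
  rw [Finset.prod_Icc_succ_top (by omega : 1 ≤ m + 1),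
    show ((1:ℝ)-q)^(m+1) = (1-q)^m*(1-q) from pow_succ _ _, mul_div_mul_comm]

lemma qbinom_of_gt {n k : ℕ} (h : n < k) : qbinom q n k = 0 := if_neg (by omega)

lemma qbinom_self (hq0 : 0 < q) (hq1 : q < 1) (n : ℕ) : qbinom q n n = 1 := by
  unfold qbinom
  rw [if_pos le_rfl, Nat.sub_self, qfact_zero, mul_one,
    div_self (qfact_ne_zero hq0 hq1 n)]

lemma qbinom_zero (hq0 : 0 < q) (hq1 : q < 1) (n : ℕ) : qbinom q n 0 = 1 := by
  unfold qbinom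
  rw [if_pos (Nat.zero_le n), Nat.sub_zero, qfact_zero, one_mul,
    div_self (qfact_ne_zero hq0 hq1 n)]

lemma qbinom_symm (hq0 : 0 < q) (hq1 : q < 1) {n k : ℕ} (h : k ≤ n) :
    qbinom q n (n - k) = qbinom q n k := by
  unfold qbinom
  rw [if_pos (by omega), if_pos h, Nat.sub_sub_self h, mul_comm]

lemma qbinom_pascal (hq0 : 0 < q) (hq1 : q < 1) (n m : ℕ) :
    qbinom q (n+1) (m+1) = qbinom q n (m+1) + q ^ ((n:ℤ) - m) * qbinom q n m := by
  have hq : q ≠ 0 := hq0.ne'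
  have h1q : (1:ℝ) - q ≠ 0 := by linarith
  rcases lt_or_ge n m with h | h
  · rw [qbinom_of_gt (by omega), qbinom_of_gt (by omega), qbinom_of_gt (by omega)]
    ring
  rcases eq_or_lt_of_le h with rfl | h'
  · rw [qbinom_self hq0 hq1, qbinom_self hq0 hq1, qbinom_of_gt (by omega), sub_self,
      zpow_zero]
    ring
  obtain ⟨d, rfl⟩ : ∃ d, n = m + 1 + d := ⟨n - (m+1), by omega⟩
  rw [show ((m+1+d : ℕ):ℤ) - (m:ℤ) = ((d+1:ℕ):ℤ) by push_cast; ring, zpow_natCast]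
  unfold qbinom
  rw [if_pos (by omega), if_pos (by omega), if_pos (by omega)]
  have e1 : m + 1 + d + 1 - (m + 1) = d + 1 := by omega
  have e2 : m + 1 + d - (m + 1) = d := by omega
  have e3 : m + 1 + d - m = d + 1 := by omega
  rw [e1, e2, e3]
  rw [show m + 1 + d + 1 = (m + 1 + d) + 1 from rfl, qfact_succ (m + 1 + d),
    qfact_succ m, qfact_succ d]
  have hfm := qfact_ne_zero hq0 hq1 m
  have hfd := qfact_ne_zero hq0 hq1 d
  have hfn := qfact_ne_zero hq0 hq1 (m + 1 + d)
  have hm1 : (1:ℝ) - q ^ (m+1) ≠ 0 := (one_sub_q_pow_pos hq0 hq1 _ (by omega)).ne'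
  have hd1 : (1:ℝ) - q ^ (d+1) ≠ 0 := (one_sub_q_pow_pos hq0 hq1 _ (by omega)).ne'
  field_simp
  ring

lemma mulz (hq : q ≠ 0) (a b c d : ℤ) (X Y : ℝ) (h : a + b = c + d) :
    q^a * (q^b * X) * Y = q^c * (q^d * X * Y) := by
  have h2 : q^a * q^b = q^c * q^d := by rw [← zpow_add₀ hq, ← zpow_add₀ hq, h]
  calc q^a*(q^b*X)*Y = (q^a*q^b)*(X*Y) := by ring
    _ = (q^c*q^d)*(X*Y) := by rw [h2]
    _ = q^c*(q^d*X*Y) := by ring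

lemma qbinom_vandermonde (hq0 : 0 < q) (hq1 : q < 1) (m n h : ℕ) :
    qbinom q (m + n) h
      = ∑ s ∈ Finset.range (h+1),
        q ^ ((s:ℤ) * ((n:ℤ) - (h:ℤ) + (s:ℤ))) * qbinom q m s * qbinom q n (h - s) := by
  have hq : q ≠ 0 := hq0.ne'
  induction m generalizing h with
  | zero =>
    rw [Finset.sum_eq_single_of_mem 0 (Finset.mem_range.2 (by omega))]
    · simp [qbinom_zero hq0 hq1]
    · intro s hs hs0
      rw [qbinom_of_gt (by omega)]; ring
  | succ m IH =>
    cases h with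
    | zero => simp [qbinom_zero hq0 hq1]
    | succ h =>
      have hsplit : ∀ s : ℕ, qbinom q (m+1) s
          = qbinom q m s + (if s = 0 then 0 else q ^ ((m:ℤ) + 1 - (s:ℤ)) * qbinom q m (s-1)) := by
        intro s
        cases s with
        | zero => simp [qbinom_zero hq0 hq1]
        | succ t =>
          rw [if_neg (Nat.succ_ne_zero t), Nat.add_sub_cancel,
            show (m:ℤ) + 1 - ((t+1 : ℕ):ℤ) = (m:ℤ) - (t:ℤ) by push_cast; ring,
            qbinom_pascal hq0 hq1 m t]
      have h2 : (∑ s ∈ Finset.range (h+1+1),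
            q ^ ((s:ℤ) * ((n:ℤ) - ((h+1:ℕ):ℤ) + (s:ℤ))) * qbinom q (m+1) s * qbinom q n (h+1 - s))
          = (∑ s ∈ Finset.range (h+1+1),
              q ^ ((s:ℤ) * ((n:ℤ) - ((h+1:ℕ):ℤ) + (s:ℤ))) * qbinom q m s * qbinom q n (h+1 - s))
            + ∑ s ∈ Finset.range (h+1+1), (if s = 0 then 0 else
              q ^ ((s:ℤ) * ((n:ℤ) - ((h+1:ℕ):ℤ) + (s:ℤ)))
                * (q ^ ((m:ℤ) + 1 - (s:ℤ)) * qbinom q m (s-1)) * qbinom q n (h+1 - s)) := by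
        rw [← Finset.sum_add_distrib]
        refine Finset.sum_congr rfl fun s _ => ?_
        rw [hsplit s]
        split_ifs with h0 <;> ring
      have h3 : (∑ s ∈ Finset.range (h+1+1), (if s = 0 then 0 else
              q ^ ((s:ℤ) * ((n:ℤ) - ((h+1:ℕ):ℤ) + (s:ℤ)))
                * (q ^ ((m:ℤ) + 1 - (s:ℤ)) * qbinom q m (s-1)) * qbinom q n (h+1 - s)))
          = q ^ ((m:ℤ) + (n:ℤ) - (h:ℤ)) * ∑ s ∈ Finset.range (h+1),
              q ^ ((s:ℤ) * ((n:ℤ) - (h:ℤ) + (s:ℤ))) * qbinom q m s * qbinom q n (h - s) := by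
        rw [Finset.sum_range_succ']
        rw [if_pos rfl, add_zero, Finset.mul_sum]
        refine Finset.sum_congr rfl fun i _ => ?_
        simp only [if_neg (Nat.succ_ne_zero i), Nat.succ_sub_succ, Nat.sub_zero]
        exact mulz hq _ _ _ _ _ _ (by push_cast; ring)
      rw [show m + 1 + n = (m + n) + 1 from by omega, qbinom_pascal hq0 hq1 (m+n) h,
        h2, h3, ← IH (h+1), ← IH h,
        show ((m+n:ℕ):ℤ) = (m:ℤ)+(n:ℤ) by push_cast; ring]

lemma telesc (hq0 : 0 < q) (hq1 : q < 1) (k r : ℕ) (hk : 1 ≤ k) (hr : 1 ≤ r) (M : ℕ) :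
    ∑ p ∈ Finset.range (M+1),
      ((-1:ℝ)^p * q ^ (((p:ℤ)*((p:ℤ)+1))/2 + ((r:ℤ)-(k:ℤ))*(p:ℤ)) * qbinom q k (p+r))
    = (-1:ℝ)^M * q ^ (((M:ℤ)*((M:ℤ)+1))/2 + ((r:ℤ)-(k:ℤ))*(M:ℤ)) * qbinom q (k-1) (M+r)
      + q ^ ((k:ℤ)-(r:ℤ)) * qbinom q (k-1) (r-1) := by
  have hq : q ≠ 0 := hq0.ne'
  induction M with
  | zero =>
    have hp := qbinom_pascal hq0 hq1 (k-1) (r-1)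
    rw [show k-1+1 = k from by omega, show r-1+1 = r from by omega,
      show ((k-1:ℕ):ℤ) - ((r-1:ℕ):ℤ) = (k:ℤ) - (r:ℤ) from by omega] at hp
    simp only [Finset.sum_range_one, Nat.cast_zero, pow_zero, zero_add]
    norm_num [hp]
  | succ M IH =>
    rw [Finset.sum_range_succ, IH]
    have hp := qbinom_pascal hq0 hq1 (k-1) (M+r)
    rw [show k-1+1 = k from by omega] at hp
    rw [show M+1+r = (M+r)+1 from by omega, hp]
    have key : q ^ ((((M+1:ℕ):ℤ)*(((M+1:ℕ):ℤ)+1))/2 + ((r:ℤ)-(k:ℤ))*((M+1:ℕ):ℤ))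
          * q ^ (((k-1:ℕ):ℤ) - ((M+r:ℕ):ℤ))
        = q ^ (((M:ℤ)*((M:ℤ)+1))/2 + ((r:ℤ)-(k:ℤ))*(M:ℤ)) := by
      rw [← zpow_add₀ hq]
      congr 1
      have h2 : (((M+1:ℕ):ℤ)*(((M+1:ℕ):ℤ)+1)) = (M:ℤ)*((M:ℤ)+1) + ((M:ℤ)+1)*2 := by
        push_cast; ring
      rw [h2, Int.add_mul_ediv_right _ _ two_ne_zero]
      rw [show ((k-1:ℕ):ℤ) = (k:ℤ)-1 from by omega,
        show ((M+r:ℕ):ℤ) = (M:ℤ)+(r:ℤ) from by push_cast; ring]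
      push_cast; ring
    linear_combination ((-1:ℝ)^(M+1) * qbinom q (k-1) (M+r)) * key

lemma qInnerSum (hq0 : 0 < q) (hq1 : q < 1) (N K k r : ℕ)
    (hN : 1 ≤ N) (hK : K ≤ N - 1) (hk1 : 1 ≤ k) (hkN : k ≤ N)
    (hr1 : 1 ≤ r) (hr2 : r ≤ N - K) :
    ∑ p ∈ Finset.range (K+1), sCoef q N K p r k
      = (-1:ℝ)^(N-K) * q ^ (((K:ℤ)*K-K)/2 + (r:ℤ)*((K:ℤ)+(r:ℤ)-(k:ℤ)) + ((k:ℤ)-(r:ℤ)))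
          * qbinom q (k-1) (r-1) * qbinom q (N-k) (N-K-r) := by
  have hq : q ≠ 0 := hq0.ne'
  by_cases hc : k ≤ K + r
  · by_cases hrk : r ≤ k
    · have hsum : ∑ p ∈ Finset.range (K+1), sCoef q N K p r k
          = ∑ p ∈ Finset.range ((k-r)+1), sCoef q N K p r k := by
        apply (Finset.sum_subset (Finset.range_subset_range.2 (by omega)) ?_).symm
        intro p hp hnp
        simp only [Finset.mem_range] at hp hnp
        unfold sCoef
        exact if_neg (by omega)
      rw [hsum]
      have hterm : ∀ p ∈ Finset.range ((k-r)+1), sCoef q N K p r k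
          = ((-1:ℝ)^(N-K) * q ^ (((K:ℤ)*K-K)/2 + (r:ℤ)*((K:ℤ)+(r:ℤ)-(k:ℤ)))
              * qbinom q (N-k) (N-K-r))
            * ((-1:ℝ)^p * q ^ (((p:ℤ)*((p:ℤ)+1))/2 + ((r:ℤ)-(k:ℤ))*(p:ℤ)) * qbinom q k (p+r)) := by
        intro p hp
        simp only [Finset.mem_range] at hp
        unfold sCoef
        rw [if_pos ⟨by omega, hc⟩, pow_add,
          show ((p:ℤ)*((p:ℤ)+1))/2 + ((r:ℤ)-(k:ℤ))*(p:ℤ) + ((K:ℤ)*K-K)/2 + (r:ℤ)*((K:ℤ)+(r:ℤ)-(k:ℤ))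
            = (((K:ℤ)*K-K)/2 + (r:ℤ)*((K:ℤ)+(r:ℤ)-(k:ℤ)))
              + (((p:ℤ)*((p:ℤ)+1))/2 + ((r:ℤ)-(k:ℤ))*(p:ℤ)) from by ring,
          zpow_add₀ hq]
        ring
      rw [Finset.sum_congr rfl hterm, ← Finset.mul_sum,
        telesc hq0 hq1 k r hk1 hr1 (k-r),
        show (k-r)+r = k from by omega, qbinom_of_gt (show k-1 < k by omega)]
      simp only [zpow_add₀ hq]
      ring
    · rw [Finset.sum_eq_zero fun p _ => by unfold sCoef; exact if_neg (by omega),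
        qbinom_of_gt (show k-1 < r-1 by omega)]
      ring
  · rw [Finset.sum_eq_zero fun p _ => by unfold sCoef; exact if_neg (by omega),
      qbinom_of_gt (show N-k < N-K-r by omega)]
    ring

end Aux

/-- **Lemma (q-binomial summation identity).**
`Σ_{p=0}^{K} Σ_{r=1}^{N−K} s_{K,p,r}(k) = (−1)^{N−K} q^{(K²+K)/2} [N−1 choose K]_q`. -/
theorem qbinomial_summation_identity
    (q : ℝ) (hq0 : 0 < q) (hq1 : q < 1)
    (N K k : ℕ) (hN : 1 ≤ N) (hK : K ≤ N - 1) (hk1 : 1 ≤ k) (hkN : k ≤ N) :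
    (∑ p ∈ Finset.range (K + 1), ∑ r ∈ Finset.Icc 1 (N - K), sCoef q N K p r k)
    = (-1 : ℝ) ^ (N - K) * q ^ ((K ^ 2 + K) / 2) * qbinom q (N - 1) K := by
  have hq : q ≠ 0 := hq0.ne'
  rw [Finset.sum_comm]
  have hrw : ∀ r ∈ Finset.Icc 1 (N-K), (∑ p ∈ Finset.range (K+1), sCoef q N K p r k)
      = (-1:ℝ)^(N-K) * q ^ (((K:ℤ)*K-K)/2 + (r:ℤ)*((K:ℤ)+(r:ℤ)-(k:ℤ)) + ((k:ℤ)-(r:ℤ)))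
          * qbinom q (k-1) (r-1) * qbinom q (N-k) (N-K-r) := fun r hr =>
    qInnerSum hq0 hq1 N K k r hN hK hk1 hkN (Finset.mem_Icc.1 hr).1 (Finset.mem_Icc.1 hr).2
  rw [Finset.sum_congr rfl hrw]
  rw [show Finset.Icc 1 (N-K) = Finset.Ico 1 (N-K+1) from by rw [Finset.Ico_add_one_right_eq_Icc]]
  rw [Finset.sum_Ico_eq_sum_range]
  rw [show N - K + 1 - 1 = N - K from by omega]
  have hstep : ∀ s ∈ Finset.range (N-K),
      (-1:ℝ)^(N-K) * q ^ (((K:ℤ)*K-K)/2 + ((1+s:ℕ):ℤ)*((K:ℤ)+((1+s:ℕ):ℤ)-(k:ℤ))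
          + ((k:ℤ)-((1+s:ℕ):ℤ)))
        * qbinom q (k-1) ((1+s)-1) * qbinom q (N-k) (N-K-(1+s))
      = ((-1:ℝ)^(N-K) * q ^ (((K:ℤ)*K-K)/2 + (K:ℤ)))
        * (q ^ ((s:ℤ) * (((N-k:ℕ):ℤ) - ((N-1-K:ℕ):ℤ) + (s:ℤ)))
            * qbinom q (k-1) s * qbinom q (N-k) ((N-1-K) - s)) := by
    intro s hs
    simp only [Finset.mem_range] at hs
    rw [show (1+s)-1 = s from by omega, show N-K-(1+s) = (N-1-K)-s from by omega]
    have hexp : ((K:ℤ)*K-K)/2 + ((1+s:ℕ):ℤ)*((K:ℤ)+((1+s:ℕ):ℤ)-(k:ℤ)) + ((k:ℤ)-((1+s:ℕ):ℤ))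
        = (((K:ℤ)*K-K)/2 + (K:ℤ)) + (s:ℤ)*(((N-k:ℕ):ℤ) - ((N-1-K:ℕ):ℤ) + (s:ℤ)) := by
      rw [show ((N-k:ℕ):ℤ) = (N:ℤ)-(k:ℤ) from by omega,
        show ((N-1-K:ℕ):ℤ) = (N:ℤ)-1-(K:ℤ) from by omega]
      generalize ((K:ℤ)*K-K)/2 = D
      push_cast
      ring
    rw [hexp, zpow_add₀ hq]
    ring
  rw [Finset.sum_congr rfl hstep, ← Finset.mul_sum]
  have hv := qbinom_vandermonde hq0 hq1 (k-1) (N-k) (N-1-K)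
  rw [show (k-1) + (N-k) = N-1 from by omega, show (N-1-K)+1 = N-K from by omega] at hv
  rw [← hv, qbinom_symm hq0 hq1 hK]
  rw [show (((K:ℤ)*K-K)/2 + (K:ℤ)) = (((K^2+K)/2 : ℕ) : ℤ) from by
    have h2 : (K^2 : ℕ) = K*K := by rw [pow_two]
    omega, zpow_natCast]
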